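/- Suppose b is C^p on (−∞, x∞] with b^{(j)}(x∞⁻) = 0 for 1 ≤ j ≤ p−1 and b^{(p)}(x∞⁻) ≠ 0, and b(x) = b₊ for x ≥ x∞. Then d_k is (p+1)-times differentiable at t_k from the left, d_k^{(j)}(t_k) = 0 for j = 1, …, p, and d_k^{(p+1)}(t_k) = −2(k − a∞) b₊^{−(p+3)/2} b^{(p)}(x∞⁻). -/

import Mathlib

open MeasureTheory intervalIntegral Set

lemma my_comp_affine (F : ℝ → ℝ) (c d T : ℝ) (hc : 0 < c) (N : ℕ)
    (hF : ContDiffOn ℝ N F (Iic (c*T+d))) :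
    ∀ n : ℕ, n ≤ N → ∀ t ∈ Iic T,
      iteratedDerivWithin n (fun x => F (c*x+d)) (Iic T) t
        = c^n * iteratedDerivWithin n F (Iic (c*T+d)) (c*t+d) := by
  intro n
  induction n with
  | zero => intro _ t ht; simp
  | succ n IH =>
    intro hn t ht
    have hmap : Set.MapsTo (fun x => c*x+d) (Iic T) (Iic (c*T+d)) := by
      intro y hy; simp only [mem_Iic] at *; nlinarith
    have hud := uniqueDiffOn_Iic T
    have hudS := uniqueDiffOn_Iic (c*T+d)
    rw [iteratedDerivWithin_succ]
    have hEq : Set.EqOn (iteratedDerivWithin n (fun x => F (c*x+d)) (Iic T))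
        (fun x => c^n * iteratedDerivWithin n F (Iic (c*T+d)) (c*x+d)) (Iic T) :=
      fun y hy => IH (Nat.le_of_succ_le hn) y hy
    rw [derivWithin_congr hEq (hEq ht)]
    have hdiff : DifferentiableWithinAt ℝ (iteratedDerivWithin n F (Iic (c*T+d)))
        (Iic (c*T+d)) (c*t+d) := by
      refine (hF.differentiableOn_iteratedDerivWithin ?_ hudS) _ (hmap ht)
      exact_mod_cast Nat.lt_of_lt_of_le (Nat.lt_succ_self n) hn
    have haff : HasDerivWithinAt (fun x => c*x+d) c (Iic T) t := by
      simpa using ((hasDerivWithinAt_id t (Iic T)).const_mul c).add_const d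
    have hco := (hdiff.hasDerivWithinAt.comp t haff hmap).const_mul (c^n)
    have hdW := hco.derivWithin (hud t ht)
    simp only [Function.comp] at hdW
    rw [hdW, iteratedDerivWithin_succ]
    ring

lemma my_pascal (n : ℕ) (A B : ℕ → ℝ) :
    ∑ i ∈ Finset.range (n+1), (n.choose i : ℝ) * (A (i+1) * B (n-i) + A i * B (n-i+1))
      = ∑ i ∈ Finset.range (n+2), ((n+1).choose i : ℝ) * (A i * B (n+1-i)) := by
  have key : ∑ i ∈ Finset.range (n+1), (n.choose i : ℝ) * (A i * B (n-i+1))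
      = ∑ i ∈ Finset.range (n+1), (n.choose (i+1) : ℝ) * (A (i+1) * B (n-i)) + A 0 * B (n+1) := by
    rw [Finset.sum_range_succ' (fun i => (n.choose i : ℝ) * (A i * B (n-i+1))) n]
    rw [Finset.sum_range_succ (fun i => (n.choose (i+1) : ℝ) * (A (i+1) * B (n-i))) n]
    simp only [Nat.choose_succ_self, Nat.cast_zero, zero_mul, add_zero, Nat.choose_zero_right,
      Nat.cast_one, one_mul, Nat.sub_zero]
    congr 1
    refine Finset.sum_congr rfl fun i hi => ?_
    rw [Finset.mem_range] at hi
    have h : n - (i+1) + 1 = n - i := by omega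
    rw [h]
  have expand : ∀ i ∈ Finset.range (n+1),
      (n.choose i : ℝ) * (A (i+1) * B (n-i) + A i * B (n-i+1))
        = (n.choose i : ℝ) * (A (i+1) * B (n-i)) + (n.choose i : ℝ) * (A i * B (n-i+1)) :=
    fun i _ => by ring
  rw [Finset.sum_congr rfl expand, Finset.sum_add_distrib, key]
  rw [Finset.sum_range_succ' (fun i => ((n+1).choose i : ℝ) * (A i * B (n+1-i))) (n+1)]
  simp only [Nat.choose_succ_succ, Nat.succ_sub_succ, Nat.choose_zero_right, Nat.cast_add,
    Nat.cast_one, Nat.sub_zero, one_mul]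
  rw [Finset.sum_congr rfl (fun i _ => (add_mul ((n.choose i : ℝ)) ((n.choose (i+1) : ℝ))
    (A (i+1) * B (n-i)))), Finset.sum_add_distrib]
  ring

lemma my_leibniz (T : ℝ) (φ ψ : ℝ → ℝ) :
    ∀ n : ℕ, ContDiffOn ℝ n φ (Iic T) → ContDiffOn ℝ n ψ (Iic T) → ∀ t ∈ Iic T,
      iteratedDerivWithin n (fun x => φ x * ψ x) (Iic T) t
        = ∑ i ∈ Finset.range (n+1), (n.choose i : ℝ) *
            (iteratedDerivWithin i φ (Iic T) t * iteratedDerivWithin (n-i) ψ (Iic T) t) := by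
  intro n
  induction n with
  | zero => intro _ _ t ht; simp
  | succ n IH =>
    intro hφ hψ t ht
    have hud := uniqueDiffOn_Iic T
    rw [iteratedDerivWithin_succ]
    have hEq : Set.EqOn (iteratedDerivWithin n (fun x => φ x * ψ x) (Iic T))
        (fun x => ∑ i ∈ Finset.range (n+1), (n.choose i : ℝ) *
          (iteratedDerivWithin i φ (Iic T) x * iteratedDerivWithin (n-i) ψ (Iic T) x)) (Iic T) :=
      fun y hy => IH (hφ.of_le (by exact_mod_cast Nat.le_succ n))
        (hψ.of_le (by exact_mod_cast Nat.le_succ n)) y hy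
    rw [derivWithin_congr hEq (hEq ht)]
    have hD : ∀ i : ℕ, i < n + 1 → ∀ f : ℝ → ℝ, ContDiffOn ℝ (n+1 : ℕ) f (Iic T) →
        HasDerivWithinAt (iteratedDerivWithin i f (Iic T))
          (iteratedDerivWithin (i+1) f (Iic T) t) (Iic T) t := by
      intro i hi f hf
      have := ((hf.differentiableOn_iteratedDerivWithin (by exact_mod_cast hi) hud) t ht)
      have h2 := this.hasDerivWithinAt
      rwa [← iteratedDerivWithin_succ] at h2
    have key : HasDerivWithinAt
        (fun x => ∑ i ∈ Finset.range (n+1), (n.choose i : ℝ) *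
          (iteratedDerivWithin i φ (Iic T) x * iteratedDerivWithin (n-i) ψ (Iic T) x))
        (∑ i ∈ Finset.range (n+1), (n.choose i : ℝ) *
          (iteratedDerivWithin (i+1) φ (Iic T) t * iteratedDerivWithin (n-i) ψ (Iic T) t
            + iteratedDerivWithin i φ (Iic T) t * iteratedDerivWithin (n-i+1) ψ (Iic T) t))
        (Iic T) t := by
      apply HasDerivWithinAt.fun_sum
      intro i hi
      rw [Finset.mem_range] at hi
      exact ((hD i (by omega) φ hφ).mul (hD (n-i) (by omega) ψ hψ)).const_mul _
    rw [key.derivWithin (hud t ht)]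
    exact my_pascal n (fun i => iteratedDerivWithin i φ (Iic T) t)
      (fun i => iteratedDerivWithin i ψ (Iic T) t)

theorem stmt_8 (b : ℝ → ℝ) (bm bp xinf : ℝ) (p : ℕ) (hp : 1 ≤ p)
    (hb : Continuous b) (hbm : 0 < bm) (hlow : ∀ x, bm ≤ b x) (hup : ∀ x, b x ≤ bp)
    (hflat : ∀ x, xinf ≤ x → b x = bp)
    (hreg : ContDiffOn ℝ p b (Iic xinf))
    (hvanish : ∀ j : ℕ, 1 ≤ j → j ≤ p - 1 → iteratedDerivWithin j b (Iic xinf) xinf = 0)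
    (hnonzero : iteratedDerivWithin p b (Iic xinf) xinf ≠ 0)
    (a ainv : ℝ → ℝ) (ha : ∀ x, a x = ∫ t in (0:ℝ)..x, b t)
    (hleft : ∀ x, ainv (a x) = x) (hright : ∀ k, a (ainv k) = k) :
    ∀ k : ℝ, a xinf < k →
      (ContDiffWithinAt ℝ (p + 1)
          (fun t => (a ((Real.sqrt bp)⁻¹ * t + ainv k) - k) ^ 2 / bp - t ^ 2)
          (Iic ((a xinf - k) / Real.sqrt bp)) ((a xinf - k) / Real.sqrt bp)) ∧
      (∀ j : ℕ, 1 ≤ j → j ≤ p →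
        iteratedDerivWithin j
          (fun t => (a ((Real.sqrt bp)⁻¹ * t + ainv k) - k) ^ 2 / bp - t ^ 2)
          (Iic ((a xinf - k) / Real.sqrt bp)) ((a xinf - k) / Real.sqrt bp) = 0) ∧
      iteratedDerivWithin (p + 1)
          (fun t => (a ((Real.sqrt bp)⁻¹ * t + ainv k) - k) ^ 2 / bp - t ^ 2)
          (Iic ((a xinf - k) / Real.sqrt bp)) ((a xinf - k) / Real.sqrt bp)
        = -2 * (k - a xinf) * ((Real.sqrt bp) ^ (p + 3))⁻¹
            * iteratedDerivWithin p b (Iic xinf) xinf := by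
  intro k hk
  have bp0 : 0 < bp := lt_of_lt_of_le hbm ((hlow 0).trans (hup 0))
  set sq := Real.sqrt bp with hsqdef
  have sq0 : 0 < sq := Real.sqrt_pos.2 bp0
  have hsq2 : sq * sq = bp := Real.mul_self_sqrt bp0.le
  set c : ℝ := sq⁻¹ with hcdef
  have c0 : 0 < c := inv_pos.2 sq0
  set xk := ainv k with hxkdef
  set T := (a xinf - k) / sq with hTdef
  have memT : T ∈ Iic T := mem_Iic.2 le_rfl
  have hud := uniqueDiffOn_Iic T
  have hudS := uniqueDiffOn_Iic xinf
  -- derivative of a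
  have haD : ∀ x, HasDerivAt a (b x) x := by
    intro x
    have : HasDerivAt (fun u => ∫ t in (0:ℝ)..u, b t) (b x) x :=
      intervalIntegral.integral_hasDerivAt_right (hb.intervalIntegrable 0 x)
        (hb.stronglyMeasurableAtFilter _ _) hb.continuousAt
    have hfe : a = fun u => ∫ t in (0:ℝ)..u, b t := funext ha
    rw [hfe]; exact this
  have hmono : StrictMono a :=
    strictMono_of_deriv_pos fun x => by
      rw [(haD x).deriv]; exact lt_of_lt_of_le hbm (hlow x)
  have hak : a xk = k := hright k
  have hxk_gt : xinf < xk := by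
    have := hk; rw [← hak] at this; exact hmono.lt_iff_lt.1 this
  -- relation between xk and xinf
  have hIadd := intervalIntegral.integral_add_adjacent_intervals (μ := volume)
    (hb.intervalIntegrable 0 xinf) (hb.intervalIntegrable xinf xk)
  have hIconst : ∫ x in xinf..xk, b x = bp * (xk - xinf) := by
    rw [intervalIntegral.integral_congr (g := fun _ => bp)
      (fun x hx => by rw [Set.uIcc_of_le hxk_gt.le] at hx; exact hflat x hx.1),
      intervalIntegral.integral_const, smul_eq_mul, mul_comm]
  have hxkeq : k - a xinf = bp * (xk - xinf) := by
    have h1 := ha xinf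
    have h2 := ha xk
    rw [← hak] at *
    linarith [hIadd, hIconst, h1, h2]
  have hLT : c * T + xk = xinf := by
    rw [hTdef, hcdef]
    field_simp
    nlinarith [hsq2, hxkeq]
  have hmapsto : Set.MapsTo (fun t => c * t + xk) (Iic T) (Iic xinf) := by
    intro y hy
    simp only [mem_Iic] at *
    nlinarith [hLT]
  -- smoothness of a on Iic xinf
  have hderivWithin : ∀ x ∈ Iic xinf, derivWithin a (Iic xinf) x = b x := fun x hx =>
    ((haD x).hasDerivWithinAt).derivWithin (hudS x hx)
  have haC : ContDiffOn ℝ (p + 1 : ℕ) a (Iic xinf) := by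
    have : ((p + 1 : ℕ) : WithTop ℕ∞) = (p : WithTop ℕ∞) + 1 := by push_cast; ring
    rw [this, contDiffOn_succ_iff_derivWithin hudS]
    refine ⟨fun x hx => ((haD x).differentiableAt).differentiableWithinAt, ?_, ?_⟩
    · intro h; simp at h
    · exact hreg.congr hderivWithin
  -- the two factors
  set φ : ℝ → ℝ := fun t => a (c * t + xk) + (-sq * t + -k) with hφdef
  set ψ : ℝ → ℝ := fun t => a (c * t + xk) + (sq * t + -k) with hψdef
  have hfun : (fun t => (a ((Real.sqrt bp)⁻¹ * t + ainv k) - k) ^ 2 / bp - t ^ 2)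
      = fun t => bp⁻¹ * (φ t * ψ t) := by
    funext t
    have h1 : φ t * ψ t = (a (c * t + xk) - k) ^ 2 - bp * t ^ 2 := by
      simp only [hφdef, hψdef]
      rw [← hsq2]
      ring
    show (a (c * t + xk) - k) ^ 2 / bp - t ^ 2 = bp⁻¹ * (φ t * ψ t)
    rw [h1]
    generalize a (c * t + xk) = A
    field_simp
  have haffC : ContDiff ℝ (p + 1 : ℕ) (fun t : ℝ => c * t + xk) :=
    (contDiff_const.mul contDiff_id).add contDiff_const
  have hALC : ContDiffOn ℝ (p + 1 : ℕ) (fun t => a (c * t + xk)) (Iic T) :=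
    haC.comp haffC.contDiffOn hmapsto
  have hφC : ContDiffOn ℝ (p + 1 : ℕ) φ (Iic T) :=
    hALC.add (((contDiff_const.mul contDiff_id).add contDiff_const).contDiffOn)
  have hψC : ContDiffOn ℝ (p + 1 : ℕ) ψ (Iic T) :=
    hALC.add (((contDiff_const.mul contDiff_id).add contDiff_const).contDiffOn)
  -- derivative of φ within
  have hφd : Set.EqOn (derivWithin φ (Iic T)) (fun t => -sq + c * b (c * t + xk)) (Iic T) := by
    intro t ht
    have hcomp : HasDerivWithinAt (fun u => a (c * u + xk)) (b (c * t + xk) * c) (Iic T) t := by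
      have haff : HasDerivWithinAt (fun u => c * u + xk) c (Iic T) t := by
        simpa using ((hasDerivWithinAt_id t (Iic T)).const_mul c).add_const xk
      exact (haD (c * t + xk)).comp_hasDerivWithinAt t haff
    have hlin : HasDerivWithinAt (fun u : ℝ => -sq * u + -k) (-sq) (Iic T) t := by
      simpa using ((hasDerivWithinAt_id t (Iic T)).const_mul (-sq)).add_const (-k)
    have hsum := hcomp.add hlin
    show derivWithin φ (Iic T) t = -sq + c * b (c * t + xk)
    have hval : b (c * t + xk) * c + -sq = -sq + c * b (c * t + xk) := by ring
    rw [← hval]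
    exact hsum.derivWithin (hud t ht)
  -- iterated derivatives of φ at T
  have hreg' : ContDiffOn ℝ p b (Iic (c * T + xk)) := by rw [hLT]; exact hreg
  have hbxinf : b xinf = bp := hflat xinf le_rfl
  have hsqT : sq * T = a xinf - k := by
    rw [hTdef]; field_simp
  have hφ1 : iteratedDerivWithin 1 φ (Iic T) T = 0 := by
    rw [iteratedDerivWithin_one, hφd memT]
    show -sq + c * b (c * T + xk) = 0
    rw [hLT, hbxinf, hcdef, ← hsq2]
    field_simp
    ring
  have hφbig : ∀ m : ℕ, 1 ≤ m → m ≤ p →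
      iteratedDerivWithin (m + 1) φ (Iic T) T
        = c ^ (m + 1) * iteratedDerivWithin m b (Iic xinf) xinf := by
    intro m hm1 hmp
    rw [iteratedDerivWithin_succ',
      iteratedDerivWithin_congr hφd memT,
      iteratedDerivWithin_const_add (by omega : 0 < m) (-sq)]
    have hbL : ContDiffOn ℝ m (fun t => b (c * t + xk)) (Iic T) := by
      refine (hreg.comp ((haffC.of_le ?_).contDiffOn) hmapsto).of_le ?_
      · exact_mod_cast Nat.le_succ p
      · exact_mod_cast hmp
    rw [iteratedDerivWithin_const_mul memT hud c (hbL T memT),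
      my_comp_affine b c xk T c0 p hreg' m hmp T memT, hLT]
    ring
  have hφ0 : ∀ i : ℕ, i ≤ p → iteratedDerivWithin i φ (Iic T) T = 0 := by
    intro i hip
    match i, hip with
    | 0, _ =>
      rw [iteratedDerivWithin_zero]
      show a (c * T + xk) + (-sq * T + -k) = 0
      rw [hLT]
      nlinarith [hsqT]
    | 1, _ => exact hφ1
    | (m + 2), hip =>
      rw [hφbig (m + 1) (by omega) (by omega),
        hvanish (m + 1) (by omega) (by omega), mul_zero]
  have hφtop : iteratedDerivWithin (p + 1) φ (Iic T) T
      = c ^ (p + 1) * iteratedDerivWithin p b (Iic xinf) xinf := hφbig p hp le_rfl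
  have hψT : ψ T = 2 * (a xinf - k) := by
    show a (c * T + xk) + (sq * T + -k) = 2 * (a xinf - k)
    rw [hLT, hsqT]
    ring
  have hcast : ∀ j : ℕ, j ≤ p + 1 → ((j : ℕ) : WithTop ℕ∞) ≤ ((p + 1 : ℕ) : WithTop ℕ∞) :=
    fun j hj => by exact_mod_cast hj
  refine ⟨?_, ?_, ?_⟩
  · have h1 : ContDiffOn ℝ ((p + 1 : ℕ) : WithTop ℕ∞) (fun t => bp⁻¹ * (φ t * ψ t)) (Iic T) :=
      contDiffOn_const.mul (hφC.mul hψC)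
    have h2 := (h1 T memT)
    rw [hfun]
    have hc2 : ((p + 1 : ℕ) : WithTop ℕ∞) = (p : WithTop ℕ∞) + 1 := by push_cast; ring
    rw [← hc2]
    exact h2
  · intro j hj1 hjp
    rw [hfun,
      iteratedDerivWithin_const_mul memT hud bp⁻¹ ((hφC.mul hψC).of_le (hcast j (by omega)) T memT),
      my_leibniz T φ ψ j (hφC.of_le (hcast j (by omega))) (hψC.of_le (hcast j (by omega))) T memT,
      Finset.sum_eq_zero, mul_zero]
    intro i hi
    rw [Finset.mem_range] at hi
    rw [hφ0 i (by omega)]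
    ring
  · rw [hfun,
      iteratedDerivWithin_const_mul memT hud bp⁻¹ (hφC.mul hψC T memT),
      my_leibniz T φ ψ (p + 1) hφC hψC T memT,
      Finset.sum_range_succ,
      Finset.sum_eq_zero (fun i hi => by
        rw [Finset.mem_range] at hi
        rw [hφ0 i (by omega)]
        ring)]
    simp only [Nat.choose_self, Nat.cast_one, Nat.sub_self, one_mul, zero_add]
    rw [hφtop, iteratedDerivWithin_zero, hψT]
    rw [hcdef, ← hsq2]
    have hsne : sq ≠ 0 := ne_of_gt sq0
    field_simp
    have h : (1 / sq) ^ (p + 1) * sq ^ (p + 3) = sq ^ 2 := by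
      rw [div_pow, one_pow, pow_add sq p 3, pow_add sq p 1]; field_simp
    linear_combination (a xinf - k) * h
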